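/- arXiv:2311.08502 — 3 statements merged into one kernel-verified Lean document; each statement's English description precedes it below -/
import Mathlib

section
/- For every n ≥ 1 and every Boolean vector b : Fin n → Bool, there exists θ : Fin n → ℝ with θ_p ∈ {0, π/2, 3π/2} for every p, such that for every p ∈ Fin n: Real.cos(θ_p) = (if b_p then 0 else 1) and Real.cos(π · ∑_{i < p} Real.sin(θ_i)) · Real.sin(θ_p) = (if b_p then 1 else 0). -/
open Finset Real

lemma sin_three_pi_div_two : Real.sin (3 * π / 2) = -1 := by
  have : (3 : ℝ) * π / 2 = π + π / 2 := by ring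
  rw [this, Real.sin_add]; simp

lemma cos_three_pi_div_two : Real.cos (3 * π / 2) = 0 := by
  have : (3 : ℝ) * π / 2 = π + π / 2 := by ring
  rw [this, Real.cos_add]; simp

/-- **Lemma 1, full-entanglement case (combinatorial core).** For every Boolean vector
`b`, the rotation angles can be chosen in `{0, π/2, 3π/2}` so that, for every qubit `p`,
`cos θ_p = (if b_p then 0 else 1)` and
`(−1)^{∑_{i<p} sin θ_i} · sin θ_p = cos(π ∑_{i<p} sin θ_i) · sin θ_p = (if b_p then 1 else 0)`,
i.e. the two-local VQC with full entanglement outputs the computational basis state `|b⟩`. -/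
theorem two_local_full_entanglement_reaches_all_corners
    (n : ℕ) (hn : 1 ≤ n) (b : Fin n → Bool) :
    ∃ θ : Fin n → ℝ,
      (∀ p, θ p = 0 ∨ θ p = π / 2 ∨ θ p = 3 * π / 2) ∧
      ∀ p : Fin n,
        Real.cos (θ p) = (if b p then (0 : ℝ) else 1) ∧
        Real.cos (π * ∑ i ∈ Finset.Iio p, Real.sin (θ i)) * Real.sin (θ p)
          = (if b p then (1 : ℝ) else 0) := by
  classical
  -- extend b to ℕ
  set B : ℕ → Bool := fun i => if h : i < n then b ⟨i, h⟩ else false with hB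
  set c : ℕ → ℕ := fun p => #((Finset.range p).filter fun i => B i) with hc
  set θ' : ℕ → ℝ := fun i =>
    if B i then (if Even (c i) then π / 2 else 3 * π / 2) else 0 with hθ'
  have hsin : ∀ i, Real.sin (θ' i)
      = if B i then (if Even (c i) then (1 : ℝ) else -1) else 0 := by
    intro i
    simp only [hθ']
    by_cases h : B i <;> by_cases h2 : Even (c i) <;>
      simp [h, h2, sin_three_pi_div_two]
  have key : ∀ p, ∑ i ∈ Finset.range p, Real.sin (θ' i)
      = if Even (c p) then (0 : ℝ) else 1 := by
    intro p
    induction p with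
    | zero => simp [hc]
    | succ p ih =>
      have hcs : c (p + 1) = c p + (if B p then 1 else 0) := by
        simp only [hc, Finset.range_add_one]
        by_cases h : B p <;> simp [Finset.filter_insert, h]
      rw [Finset.sum_range_succ, ih, hsin, hcs]
      by_cases h : B p <;> by_cases h2 : Even (c p) <;>
        simp [h, h2, Nat.even_add_one]
  refine ⟨fun p => θ' p.val, ?_, ?_⟩
  · intro p
    simp only [hθ']
    by_cases h : B p.val <;> by_cases h2 : Even (c p.val) <;> simp [h, h2]
  · intro p
    have hBp : B p.val = b p := by simp [hB, p.isLt]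
    have hsum : ∑ i ∈ Finset.Iio p, Real.sin (θ' i.val)
        = ∑ i ∈ Finset.range p.val, Real.sin (θ' i) := by
      rw [← Nat.Iio_eq_range, ← Fin.map_valEmbedding_Iio, Finset.sum_map]
      rfl
    constructor
    · simp only [hθ', hBp]
      by_cases h : b p <;> by_cases h2 : Even (c p.val) <;>
        simp [h, h2, cos_three_pi_div_two]
    · rw [hsum, key, hsin, hBp]
      by_cases h : b p <;> by_cases h2 : Even (c p.val) <;>
        simp [h, h2, Real.cos_pi]
end

section
/- Let N, M ≥ 1, f₀ ∈ ℝ^N, F an N×M real matrix, L ≥ 0, ε ≥ 0, and s₀ > 0. Suppose p̂ ∈ 𝒫 = {p ∈ ℝ^N : p ≥ 0, ∑_k p_k = 1} satisfies (Fᵀp̂)_m ≤ −εL − s₀ for every m. Let P* := inf { f₀ᵀp : p ∈ 𝒫, Fᵀp ≤ 0 }, and assume the feasible set {p ∈ 𝒫 : Fᵀp ≤ 0} is nonempty. If λ̃ ∈ ℝ^M with λ̃ ≥ 0 satisfies inf_{p ∈ 𝒫} (f₀ + Fλ̃)ᵀp + εL‖λ̃‖₁ ≥ P*, then ‖λ̃‖₁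 ≤ (f₀ᵀp̂ − P*) / s₀. -/
open Finset

/-- **Multiplier bound (eq:degradation2).** With `p̂` strictly feasible (slack `s₀ > 0`)
for the perturbed primal LP `min_{p∈𝒫} f₀ᵀp s.to Fᵀp ≤ −εL·1`, `P*` the optimal value of
the original (feasible) LP, and `λ̃ ≥ 0` whose perturbed dual value is at least `P*`,
one has `‖λ̃‖₁ ≤ (f₀ᵀp̂ − P*)/s₀`. -/
theorem multiplier_bound
    (N M : ℕ) (hN : 1 ≤ N) (hM : 1 ≤ M)
    (f0 : Fin N → ℝ) (F : Matrix (Fin N) (Fin M) ℝ)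
    (L ε s0 : ℝ) (hL : 0 ≤ L) (hε : 0 ≤ ε) (hs0 : 0 < s0)
    (phat : Fin N → ℝ)
    (hphat : (∀ k, 0 ≤ phat k) ∧ ∑ k, phat k = 1)
    (hfeas : ∀ m, ∑ k, F k m * phat k ≤ -(ε * L) - s0)
    (Pstar : ℝ)
    (hPstar : Pstar = sInf {v : ℝ | ∃ p : Fin N → ℝ, ((∀ k, 0 ≤ p k) ∧ ∑ k, p k = 1) ∧
        (∀ m, ∑ k, F k m * p k ≤ 0) ∧ v = ∑ k, f0 k * p k})
    (hfeas0 : ∃ p : Fin N → ℝ, ((∀ k, 0 ≤ p k) ∧ ∑ k, p k = 1) ∧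
        ∀ m, ∑ k, F k m * p k ≤ 0)
    (lamt : Fin M → ℝ) (hlamt : ∀ m, 0 ≤ lamt m)
    (hdual : Pstar ≤ sInf {v : ℝ | ∃ p : Fin N → ℝ, ((∀ k, 0 ≤ p k) ∧ ∑ k, p k = 1) ∧
          v = ∑ k, (f0 k + ∑ m, F k m * lamt m) * p k}
        + ε * L * ∑ m, |lamt m|) :
    ∑ m, |lamt m| ≤ ((∑ k, f0 k * phat k) - Pstar) / s0 := by
  obtain ⟨hp0, hp1⟩ := hphat
  set c : Fin N → ℝ := fun k => f0 k + ∑ m, F k m * lamt m with hc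
  set Sset := {v : ℝ | ∃ p : Fin N → ℝ, ((∀ k, 0 ≤ p k) ∧ ∑ k, p k = 1) ∧
      v = ∑ k, c k * p k} with hSset
  have hS : ∑ m, |lamt m| = ∑ m, lamt m := by
    exact Finset.sum_congr rfl fun m _ => abs_of_nonneg (hlamt m)
  -- p̂'s value is in the set
  have hmem : (∑ k, c k * phat k) ∈ Sset := ⟨phat, ⟨hp0, hp1⟩, rfl⟩
  -- set is bounded below
  have hbdd : BddBelow Sset := by
    refine ⟨-∑ k, |c k|, fun v hv => ?_⟩
    obtain ⟨p, ⟨hpp, hps⟩, rfl⟩ := hv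
    have hple : ∀ k, p k ≤ 1 := by
      intro k
      have := Finset.single_le_sum (fun i _ => hpp i) (Finset.mem_univ k)
      linarith [this.trans_eq hps]
    have : ∀ k ∈ Finset.univ, -|c k| ≤ c k * p k := by
      intro k _
      calc -|c k| ≤ -|c k| * p k := by nlinarith [abs_nonneg (c k), hpp k, hple k]
        _ ≤ c k * p k := mul_le_mul_of_nonneg_right (neg_abs_le (c k)) (hpp k)
    calc -∑ k, |c k| = ∑ k, -|c k| := by rw [Finset.sum_neg_distrib]
      _ ≤ ∑ k, c k * p k := Finset.sum_le_sum this
  have hinf : sInf Sset ≤ ∑ k, c k * phat k := csInf_le hbdd hmem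
  -- value at p̂
  have hswap : ∑ k, c k * phat k
      = (∑ k, f0 k * phat k) + ∑ m, lamt m * ∑ k, F k m * phat k := by
    simp only [hc, add_mul, Finset.sum_add_distrib, Finset.sum_mul, Finset.mul_sum]
    rw [Finset.sum_comm]
    congr 1
    exact Finset.sum_congr rfl fun m _ => Finset.sum_congr rfl fun k _ => by ring
  have hbound : ∑ m, lamt m * ∑ k, F k m * phat k
      ≤ (-(ε * L) - s0) * ∑ m, lamt m := by
    rw [Finset.mul_sum]
    refine Finset.sum_le_sum fun m _ => ?_
    have := mul_le_mul_of_nonneg_left (hfeas m) (hlamt m)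
    linarith
  have key : Pstar ≤ (∑ k, f0 k * phat k) - s0 * ∑ m, lamt m := by
    have h1 : Pstar ≤ (∑ k, c k * phat k) + ε * L * ∑ m, lamt m := by
      rw [hS] at hdual
      exact hdual.trans (by linarith)
    rw [hswap] at h1
    nlinarith [hbound]
  rw [hS, le_div_iff₀ hs0]
  linarith
end

section
/- Let N, M ≥ 1, f₀, f₁, …, f_M ∈ ℝ^N, F the N×M matrix with columns f₁,…,f_M, L := max_{1 ≤ m ≤ M} ‖f_m‖₁, and ε > 0. Let 𝒫 = {p ∈ ℝ^N : p ≥ 0, ∑_k p_k = 1}, define P* := inf { f₀ᵀp : p ∈ 𝒫, Fᵀp ≤ 0 }, D* := sup_{λ ≥ 0} inf_{p ∈ 𝒫} (f₀+Fλ)ᵀp, and for a nonempty S ⊆ 𝒫 define D_θ* := sup_{λ ≥ 0} inf_{q ∈ S} (f₀+Fλ)ᵀq. Assume: (i) for every p ∈ 𝒫 there exists q ∈ S with ‖p − q‖_∞ ≤ ε; (ii) there exist p̂ ∈ 𝒫 and s₀ > 0 with (Fᵀp̂)_m ≤ −εL − s₀ for all m; (iii) λ̃ ∈ ℝ^M,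 λ̃ ≥ 0, satisfies inf_{p∈𝒫}(f₀+Fλ̃)ᵀp + εL‖λ̃‖₁ = sup_{λ ≥ 0}[inf_{p∈𝒫}(f₀+Fλ)ᵀp + εL‖λ‖₁] = inf{f₀ᵀp : p∈𝒫, Fᵀp ≤ −εL·1}; and (iv) strong duality D* = P* holds for the original LP. Then D* ≤ D_θ* ≤ D* + ε‖f₀‖₁ + εL‖λ̃‖₁. -/
open Finset

private lemma simplex_lin_lb {N : ℕ} (c p : Fin N → ℝ)
    (hp : (∀ k, 0 ≤ p k) ∧ ∑ k, p k = 1) :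
    -(∑ k, |c k|) ≤ ∑ k, c k * p k := by
  have hp1 : ∀ k, p k ≤ 1 := fun k =>
    hp.2 ▸ Finset.single_le_sum (fun i _ => hp.1 i) (Finset.mem_univ k)
  calc -(∑ k, |c k|) = ∑ k, -(|c k|) := by rw [← Finset.sum_neg_distrib]
    _ ≤ ∑ k, c k * p k := Finset.sum_le_sum fun k _ => by
        have h1 : |c k * p k| ≤ |c k| := by
          rw [abs_mul, abs_of_nonneg (hp.1 k)]
          exact mul_le_of_le_one_right (abs_nonneg _) (hp1 k)
        have h2 := neg_abs_le (c k * p k)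
        linarith

private lemma lin_perturb {N : ℕ} (c p q : Fin N → ℝ) (ε : ℝ)
    (hq : ∀ k, |p k - q k| ≤ ε) :
    ∑ k, c k * q k ≤ ∑ k, c k * p k + ε * ∑ k, |c k| := by
  have h : ∀ k, c k * q k - c k * p k ≤ |c k| * ε := fun k => by
    have h1 : |c k * q k - c k * p k| ≤ |c k| * ε := by
      rw [← mul_sub, abs_mul]
      exact mul_le_mul_of_nonneg_left (by rw [abs_sub_comm]; exact hq k) (abs_nonneg _)
    linarith [le_abs_self (c k * q k - c k * p k)]
  have h2 := Finset.sum_le_sum (fun k (_ : k ∈ Finset.univ) => h k)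
  rw [Finset.sum_sub_distrib, ← Finset.sum_mul] at h2
  nlinarith [h2]

private lemma cnorm_bound {N M : ℕ} (f0 : Fin N → ℝ) (f : Fin M → Fin N → ℝ) (L : ℝ)
    (hL : ∀ m, ∑ k, |f m k| ≤ L) (lam : Fin M → ℝ) (hlam : ∀ m, 0 ≤ lam m) :
    ∑ k, |f0 k + ∑ m, lam m * f m k| ≤ ∑ k, |f0 k| + L * ∑ m, |lam m| := by
  have h1 : ∀ k, |f0 k + ∑ m, lam m * f m k| ≤ |f0 k| + ∑ m, lam m * |f m k| := fun k => by
    calc |f0 k + ∑ m, lam m * f m k| ≤ |f0 k| + |∑ m, lam m * f m k| := abs_add_le _ _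
      _ ≤ |f0 k| + ∑ m, |lam m * f m k| := by
          gcongr
          exact Finset.abs_sum_le_sum_abs _ _
      _ = |f0 k| + ∑ m, lam m * |f m k| := by
          congr 1
          exact Finset.sum_congr rfl fun m _ => by rw [abs_mul, abs_of_nonneg (hlam m)]
  calc ∑ k, |f0 k + ∑ m, lam m * f m k| ≤ ∑ k, (|f0 k| + ∑ m, lam m * |f m k|) :=
        Finset.sum_le_sum fun k _ => h1 k
    _ = ∑ k, |f0 k| + ∑ m, lam m * ∑ k, |f m k| := by
        rw [Finset.sum_add_distrib, Finset.sum_comm]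
        congr 1
        exact Finset.sum_congr rfl fun m _ => by rw [← Finset.mul_sum]
    _ ≤ ∑ k, |f0 k| + ∑ m, lam m * L := by
        gcongr with m hm
        · exact hlam m
        · exact hL m
    _ = ∑ k, |f0 k| + L * ∑ m, |lam m| := by
        have : ∑ m, |lam m| = ∑ m, lam m :=
          Finset.sum_congr rfl fun m _ => abs_of_nonneg (hlam m)
        rw [this, Finset.mul_sum]
        congr 1
        exact Finset.sum_congr rfl fun m _ => mul_comm _ _

private lemma expand_g {N M : ℕ} (f0 : Fin N → ℝ) (f : Fin M → Fin N → ℝ)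
    (lam : Fin M → ℝ) (p : Fin N → ℝ) :
    ∑ k, (f0 k + ∑ m, lam m * f m k) * p k
      = ∑ k, f0 k * p k + ∑ m, lam m * ∑ k, f m k * p k := by
  simp only [add_mul, Finset.sum_add_distrib, Finset.sum_mul, Finset.mul_sum]
  congr 1
  rw [Finset.sum_comm]
  exact Finset.sum_congr rfl fun m _ => Finset.sum_congr rfl fun k _ => by ring
/-- **Theorem 2 (performance degradation bound).** Let `P*`, `D*` be the primal and dual
optimal values of the LP `min_{p∈𝒫} f₀ᵀp s.to Fᵀp ≤ 0` over the probability simplex `𝒫`,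
and `D_θ*` the optimal dual value of its variational restriction to `S ⊆ 𝒫`. Under
(i) `ε`-approximation of `𝒫` by `S` in `ℓ∞`, (ii) strict feasibility with slack `s₀` of
the perturbed primal `Fᵀp ≤ −εL·1`, (iii) `λ̃ ≥ 0` an optimal dual vector of the perturbed
problem attaining strong duality, and (iv) strong duality `D* = P*` of the original LP:
`D* ≤ D_θ* ≤ D* + ε‖f₀‖₁ + εL‖λ̃‖₁`, where `L = max_m ‖f_m‖₁`. -/
theorem degradation_bound
    (N M : ℕ) (hN : 1 ≤ N) (hM : 1 ≤ M)
    (f0 : Fin N → ℝ) (f : Fin M → Fin N → ℝ) (L : ℝ)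
    (hL : IsGreatest {x : ℝ | ∃ m : Fin M, x = ∑ k, |f m k|} L)
    (ε : ℝ) (hε : 0 < ε)
    (S : Set (Fin N → ℝ)) (hSne : S.Nonempty)
    (hSsub : S ⊆ {p : Fin N → ℝ | (∀ k, 0 ≤ p k) ∧ ∑ k, p k = 1})
    (happrox : ∀ p : Fin N → ℝ, ((∀ k, 0 ≤ p k) ∧ ∑ k, p k = 1) →
      ∃ q ∈ S, ∀ k, |p k - q k| ≤ ε)
    (phat : Fin N → ℝ) (s0 : ℝ) (hs0 : 0 < s0)
    (hphat : (∀ k, 0 ≤ phat k) ∧ ∑ k, phat k = 1)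
    (hfeas : ∀ m, ∑ k, f m k * phat k ≤ -(ε * L) - s0)
    (Pstar Dstar Dthetastar : ℝ)
    (hPstar : Pstar = sInf {v : ℝ | ∃ p : Fin N → ℝ, ((∀ k, 0 ≤ p k) ∧ ∑ k, p k = 1) ∧
        (∀ m, ∑ k, f m k * p k ≤ 0) ∧ v = ∑ k, f0 k * p k})
    (hDstar : Dstar = sSup {d : ℝ | ∃ lam : Fin M → ℝ, (∀ m, 0 ≤ lam m) ∧
        d = sInf {v : ℝ | ∃ p : Fin N → ℝ, ((∀ k, 0 ≤ p k) ∧ ∑ k, p k = 1) ∧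
            v = ∑ k, (f0 k + ∑ m, lam m * f m k) * p k}})
    (hDthetastar : Dthetastar = sSup {d : ℝ | ∃ lam : Fin M → ℝ, (∀ m, 0 ≤ lam m) ∧
        d = sInf {v : ℝ | ∃ q ∈ S, v = ∑ k, (f0 k + ∑ m, lam m * f m k) * q k}})
    (lamt : Fin M → ℝ) (hlamt : ∀ m, 0 ≤ lamt m)
    (hopt1 : sInf {v : ℝ | ∃ p : Fin N → ℝ, ((∀ k, 0 ≤ p k) ∧ ∑ k, p k = 1) ∧
          v = ∑ k, (f0 k + ∑ m, lamt m * f m k) * p k} + ε * L * ∑ m, |lamt m|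
        = sSup {d : ℝ | ∃ lam : Fin M → ℝ, (∀ m, 0 ≤ lam m) ∧
            d = sInf {v : ℝ | ∃ p : Fin N → ℝ, ((∀ k, 0 ≤ p k) ∧ ∑ k, p k = 1) ∧
                  v = ∑ k, (f0 k + ∑ m, lam m * f m k) * p k}
              + ε * L * ∑ m, |lam m|})
    (hopt2 : sSup {d : ℝ | ∃ lam : Fin M → ℝ, (∀ m, 0 ≤ lam m) ∧
            d = sInf {v : ℝ | ∃ p : Fin N → ℝ, ((∀ k, 0 ≤ p k) ∧ ∑ k, p k = 1) ∧
                  v = ∑ k, (f0 k + ∑ m, lam m * f m k) * p k}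
              + ε * L * ∑ m, |lam m|}
        = sInf {v : ℝ | ∃ p : Fin N → ℝ, ((∀ k, 0 ≤ p k) ∧ ∑ k, p k = 1) ∧
            (∀ m, ∑ k, f m k * p k ≤ -(ε * L)) ∧ v = ∑ k, f0 k * p k})
    (hstrong : Dstar = Pstar) :
    Dstar ≤ Dthetastar ∧
      Dthetastar ≤ Dstar + ε * (∑ k, |f0 k|) + ε * L * ∑ m, |lamt m| := by

  obtain ⟨m0, hLm0⟩ := hL.1
  have hLnn : 0 ≤ L := hLm0 ▸ Finset.sum_nonneg fun k _ => abs_nonneg _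
  have hLub : ∀ m, ∑ k, |f m k| ≤ L := fun m => hL.2 ⟨m, rfl⟩
  -- bounded below of the two inner sets
  have hbbP : ∀ lam : Fin M → ℝ, BddBelow {v : ℝ | ∃ p : Fin N → ℝ,
      ((∀ k, 0 ≤ p k) ∧ ∑ k, p k = 1) ∧ v = ∑ k, (f0 k + ∑ m, lam m * f m k) * p k} :=
    fun lam => ⟨-(∑ k, |f0 k + ∑ m, lam m * f m k|), by
      rintro v ⟨p, hp, rfl⟩
      exact simplex_lin_lb _ p hp⟩
  have hbbS : ∀ lam : Fin M → ℝ, BddBelow {v : ℝ | ∃ q ∈ S,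
      v = ∑ k, (f0 k + ∑ m, lam m * f m k) * q k} :=
    fun lam => ⟨-(∑ k, |f0 k + ∑ m, lam m * f m k|), by
      rintro v ⟨q, hqS, rfl⟩
      exact simplex_lin_lb _ q (hSsub hqS)⟩
  have hneP : ∀ lam : Fin M → ℝ, Set.Nonempty {v : ℝ | ∃ p : Fin N → ℝ,
      ((∀ k, 0 ≤ p k) ∧ ∑ k, p k = 1) ∧ v = ∑ k, (f0 k + ∑ m, lam m * f m k) * p k} :=
    fun lam => ⟨_, phat, hphat, rfl⟩
  have hT : ∀ lam : Fin M → ℝ, (0:ℝ) ≤ ∑ m, |lam m| :=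
    fun lam => Finset.sum_nonneg fun m _ => abs_nonneg _
  -- phat dual bound
  have hphat_dual : ∀ lam : Fin M → ℝ, (∀ m, 0 ≤ lam m) →
      (∑ k, (f0 k + ∑ m, lam m * f m k) * phat k) + ε * L * ∑ m, |lam m|
        ≤ (∑ k, f0 k * phat k) - s0 * ∑ m, |lam m| := by
    intro lam hlam
    rw [expand_g]
    have h1 : ∑ m, lam m * ∑ k, f m k * phat k ≤ ∑ m, lam m * (-(ε * L) - s0) :=
      Finset.sum_le_sum fun m _ => mul_le_mul_of_nonneg_left (hfeas m) (hlam m)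
    have h2 : ∑ m, lam m * (-(ε * L) - s0)
        = -(ε * L * ∑ m, |lam m|) - s0 * ∑ m, |lam m| := by
      have habs : ∑ m, |lam m| = ∑ m, lam m :=
        Finset.sum_congr rfl fun m _ => abs_of_nonneg (hlam m)
      rw [habs, Finset.mul_sum, Finset.mul_sum, ← Finset.sum_neg_distrib,
        ← Finset.sum_sub_distrib]
      exact Finset.sum_congr rfl fun m _ => by ring
    linarith
  -- BddAbove of the dual sets
  have hbaD : BddAbove {d : ℝ | ∃ lam : Fin M → ℝ, (∀ m, 0 ≤ lam m) ∧
      d = sInf {v : ℝ | ∃ p : Fin N → ℝ, ((∀ k, 0 ≤ p k) ∧ ∑ k, p k = 1) ∧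
          v = ∑ k, (f0 k + ∑ m, lam m * f m k) * p k}} := by
    refine ⟨∑ k, f0 k * phat k, ?_⟩
    rintro d ⟨lam, hlam, rfl⟩
    have h1 := csInf_le (hbbP lam) ⟨phat, hphat, rfl⟩
    have h2 := hphat_dual lam hlam
    have h3 : 0 ≤ ε * L * ∑ m, |lam m| :=
      mul_nonneg (mul_nonneg hε.le hLnn) (hT lam)
    have h4 : 0 ≤ s0 * ∑ m, |lam m| := mul_nonneg hs0.le (hT lam)
    linarith
  have hbaPert : BddAbove {d : ℝ | ∃ lam : Fin M → ℝ, (∀ m, 0 ≤ lam m) ∧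
      d = sInf {v : ℝ | ∃ p : Fin N → ℝ, ((∀ k, 0 ≤ p k) ∧ ∑ k, p k = 1) ∧
            v = ∑ k, (f0 k + ∑ m, lam m * f m k) * p k}
        + ε * L * ∑ m, |lam m|} := by
    refine ⟨∑ k, f0 k * phat k, ?_⟩
    rintro d ⟨lam, hlam, rfl⟩
    have h1 := csInf_le (hbbP lam) ⟨phat, hphat, rfl⟩
    have h2 := hphat_dual lam hlam
    have h4 : 0 ≤ s0 * ∑ m, |lam m| := mul_nonneg hs0.le (hT lam)
    linarith
  have hbaDth : BddAbove {d : ℝ | ∃ lam : Fin M → ℝ, (∀ m, 0 ≤ lam m) ∧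
      d = sInf {v : ℝ | ∃ q ∈ S, v = ∑ k, (f0 k + ∑ m, lam m * f m k) * q k}} := by
    refine ⟨(∑ k, f0 k * phat k) + ε * ∑ k, |f0 k|, ?_⟩
    rintro d ⟨lam, hlam, rfl⟩
    obtain ⟨q, hqS, hq⟩ := happrox phat hphat
    have hJle : sInf {v : ℝ | ∃ q ∈ S, v = ∑ k, (f0 k + ∑ m, lam m * f m k) * q k}
        ≤ ∑ k, (f0 k + ∑ m, lam m * f m k) * q k := csInf_le (hbbS lam) ⟨q, hqS, rfl⟩
    have hgq := lin_perturb (fun k => f0 k + ∑ m, lam m * f m k) phat q ε hq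
    have hcb := cnorm_bound f0 f L hLub lam hlam
    have hεc := mul_le_mul_of_nonneg_left hcb hε.le
    have h2 := hphat_dual lam hlam
    have h4 : 0 ≤ s0 * ∑ m, |lam m| := mul_nonneg hs0.le (hT lam)
    nlinarith
  have hneD : Set.Nonempty {d : ℝ | ∃ lam : Fin M → ℝ, (∀ m, 0 ≤ lam m) ∧
      d = sInf {v : ℝ | ∃ p : Fin N → ℝ, ((∀ k, 0 ≤ p k) ∧ ∑ k, p k = 1) ∧
          v = ∑ k, (f0 k + ∑ m, lam m * f m k) * p k}} :=
    ⟨_, fun _ => (0:ℝ), fun m => le_refl 0, rfl⟩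
  have hneDth : Set.Nonempty {d : ℝ | ∃ lam : Fin M → ℝ, (∀ m, 0 ≤ lam m) ∧
      d = sInf {v : ℝ | ∃ q ∈ S, v = ∑ k, (f0 k + ∑ m, lam m * f m k) * q k}} :=
    ⟨_, fun _ => (0:ℝ), fun m => le_refl 0, rfl⟩
  constructor
  · -- lower bound
    rw [hDstar, hDthetastar]
    apply csSup_le hneD
    rintro d ⟨lam, hlam, rfl⟩
    have hIJ : sInf {v : ℝ | ∃ p : Fin N → ℝ, ((∀ k, 0 ≤ p k) ∧ ∑ k, p k = 1) ∧
          v = ∑ k, (f0 k + ∑ m, lam m * f m k) * p k}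
        ≤ sInf {v : ℝ | ∃ q ∈ S, v = ∑ k, (f0 k + ∑ m, lam m * f m k) * q k} := by
      apply csInf_le_csInf (hbbP lam)
      · obtain ⟨q0, hq0⟩ := hSne
        exact ⟨_, q0, hq0, rfl⟩
      · rintro v ⟨q, hqS, rfl⟩
        exact ⟨q, hSsub hqS, rfl⟩
    exact hIJ.trans (le_csSup hbaDth ⟨lam, hlam, rfl⟩)
  · -- upper bound
    rw [hDthetastar]
    apply csSup_le hneDth
    rintro d ⟨lam, hlam, rfl⟩
    have hJI : sInf {v : ℝ | ∃ q ∈ S, v = ∑ k, (f0 k + ∑ m, lam m * f m k) * q k}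
        ≤ sInf {v : ℝ | ∃ p : Fin N → ℝ, ((∀ k, 0 ≤ p k) ∧ ∑ k, p k = 1) ∧
            v = ∑ k, (f0 k + ∑ m, lam m * f m k) * p k}
          + ε * ∑ k, |f0 k + ∑ m, lam m * f m k| := by
      rw [← sub_le_iff_le_add]
      apply le_csInf (hneP lam)
      rintro v ⟨p, hp, rfl⟩
      obtain ⟨q, hqS, hq⟩ := happrox p hp
      have h1 : sInf {v : ℝ | ∃ q ∈ S, v = ∑ k, (f0 k + ∑ m, lam m * f m k) * q k}
          ≤ ∑ k, (f0 k + ∑ m, lam m * f m k) * q k := csInf_le (hbbS lam) ⟨q, hqS, rfl⟩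
      have h2 := lin_perturb (fun k => f0 k + ∑ m, lam m * f m k) p q ε hq
      linarith
    have hcb := cnorm_bound f0 f L hLub lam hlam
    have hεc := mul_le_mul_of_nonneg_left hcb hε.le
    have hIp : sInf {v : ℝ | ∃ p : Fin N → ℝ, ((∀ k, 0 ≤ p k) ∧ ∑ k, p k = 1) ∧
            v = ∑ k, (f0 k + ∑ m, lam m * f m k) * p k}
          + ε * L * ∑ m, |lam m|
        ≤ sInf {v : ℝ | ∃ p : Fin N → ℝ, ((∀ k, 0 ≤ p k) ∧ ∑ k, p k = 1) ∧
            v = ∑ k, (f0 k + ∑ m, lamt m * f m k) * p k} + ε * L * ∑ m, |lamt m| := by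
      rw [hopt1]
      exact le_csSup hbaPert ⟨lam, hlam, rfl⟩
    have hIt : sInf {v : ℝ | ∃ p : Fin N → ℝ, ((∀ k, 0 ≤ p k) ∧ ∑ k, p k = 1) ∧
          v = ∑ k, (f0 k + ∑ m, lamt m * f m k) * p k} ≤ Dstar := by
      rw [hDstar]
      exact le_csSup hbaD ⟨lamt, hlamt, rfl⟩
    nlinarith
end
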